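/- arXiv:2506.11704 — 2 statements merged into one kernel-verified Lean document; each statement's English description precedes it below -/
import Mathlib

section
/- Let n ≥ 8, let k be an integer with 0 ≤ k ≤ n−7, and set m = ⌊(n−k−3)/2⌋. For i ∈ {0,1}, let T_i(k) be the tree obtained from a path with k+3−i vertices by attaching m pendant leaves to each of its two endpoints; call the two endpoints of that path the star centers of T_i(k). Let C(k) be the graph obtained from T_1(k) by adding a new internally disjoint path of length k+2 between the two star centers of T_1(k). Then C(k) has |V(T_1(k))| + k + 1 vertices, C(k) is a k-isometric-universal graph for {T_0(k), T_1(k)}, and C(k) is not a (k+1)-isometric-universal graph for {T_0(k), T_1(k)}. -/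
open SimpleGraph

/-- `φ` realizes `G` as a `k`-isometric subgraph of `U`: it is injective, maps edges to
edges, and preserves every distance whose value in `U` is at most `k` (distances take
the value `⊤` between vertices in different connected components). -/
def IsKIsometricEmbedding (k : ℕ) {V W : Type} (G : SimpleGraph V) (U : SimpleGraph W)
    (φ : V → W) : Prop :=
  Function.Injective φ ∧
  (∀ u v : V, G.Adj u v → U.Adj (φ u) (φ v)) ∧
  ∀ u v : V, U.edist (φ u) (φ v) ≤ (k : ℕ∞) → G.edist u v = U.edist (φ u) (φ v)

/-- `U` is a `k`-isometric-universal graph for the pair `{G₁, G₂}`: both `G₁` and `G₂`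
are isomorphic to `k`-isometric subgraphs of `U`. -/
def IsKIsoUniversalPair (k : ℕ) {V₁ V₂ W : Type} (G₁ : SimpleGraph V₁)
    (G₂ : SimpleGraph V₂) (U : SimpleGraph W) : Prop :=
  (∃ φ : V₁ → W, IsKIsometricEmbedding k G₁ U φ) ∧
  (∃ φ : V₂ → W, IsKIsometricEmbedding k G₂ U φ)

/-- The double broom: a path with `p` vertices (`Sum.inl 0, …, Sum.inl (p-1)`) with `m`
pendant leaves attached to each of its two endpoints (`Sum.inr (Sum.inl _)` at the
endpoint `Sum.inl 0`, and `Sum.inr (Sum.inr _)` at the endpoint `Sum.inl (p-1)`).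
For `i ∈ {0,1}`, the tree `T_i(k)` of the paper is `doubleBroom (k+3-i) m`. -/
def doubleBroom (p m : ℕ) : SimpleGraph (Fin p ⊕ (Fin m ⊕ Fin m)) :=
  SimpleGraph.fromRel fun x y =>
    match x, y with
    | Sum.inl a, Sum.inl b => (b : ℕ) = (a : ℕ) + 1
    | Sum.inl a, Sum.inr (Sum.inl _) => (a : ℕ) = 0
    | Sum.inl a, Sum.inr (Sum.inr _) => (a : ℕ) = p - 1
    | _, _ => False

/-- The graph `C(k)` of the paper: `T₁(k) = doubleBroom (k+2) m` together with a new
internally disjoint path of length `k + 2` (with `k + 1` new internal vertices) joining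
its two star centers `Sum.inl 0` and `Sum.inl (k+1)`. -/
def broomCycle (k m : ℕ) :
    SimpleGraph ((Fin (k + 2) ⊕ (Fin m ⊕ Fin m)) ⊕ Fin (k + 1)) :=
  SimpleGraph.fromRel fun x y =>
    match x, y with
    | Sum.inl a, Sum.inl b => (doubleBroom (k + 2) m).Adj a b
    | Sum.inl (Sum.inl a), Sum.inr q =>
        ((a : ℕ) = 0 ∧ (q : ℕ) = 0) ∨ ((a : ℕ) = k + 1 ∧ (q : ℕ) = k)
    | Sum.inr q, Sum.inr q' => (q' : ℕ) = (q : ℕ) + 1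
    | _, _ => False

private lemma pot_bound {V : Type} {G : SimpleGraph V} (f : V → ℤ)
    (hf : ∀ a b, G.Adj a b → (f a - f b).natAbs ≤ 1) :
    ∀ {x y : V} (W : G.Walk x y), (f x - f y).natAbs ≤ W.length := by
  intro x y W
  induction W with
  | nil => simp
  | @cons u v w h p ih =>
    have h1 := hf u v h
    have : (f u - f w).natAbs ≤ (f u - f v).natAbs + (f v - f w).natAbs := by
      have := Int.natAbs_add_le (f u - f v) (f v - f w)
      simpa using this
    simp only [Walk.length_cons]
    omega

private lemma retract_bound {V W' : Type} {G : SimpleGraph V} {T : SimpleGraph W'} (f : V → W') :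
    ∀ {x y : V} (p : G.Walk x y),
      (∀ a b, s(a, b) ∈ p.edges → T.edist (f a) (f b) ≤ 1) →
      T.edist (f x) (f y) ≤ p.length := by
  intro x y p
  induction p with
  | nil => intro _; simp [edist_self]
  | @cons u v w h p ih =>
    intro hyp
    have h1 : T.edist (f u) (f v) ≤ 1 := hyp u v (by simp [Walk.edges_cons])
    have h2 : T.edist (f v) (f w) ≤ p.length :=
      ih (fun a b hab => hyp a b (by simp [Walk.edges_cons, hab]))
    calc T.edist (f u) (f w) ≤ T.edist (f u) (f v) + T.edist (f v) (f w) :=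
          SimpleGraph.edist_triangle
      _ ≤ 1 + p.length := add_le_add h1 h2
      _ = ((Walk.cons h p).length : ℕ∞) := by
          simp [Walk.length_cons]; push_cast; ring

private lemma hom_edist_le {V W' : Type} {G : SimpleGraph V} {T : SimpleGraph W'} (f : V → W')
    (hf : ∀ a b, G.Adj a b → T.Adj (f a) (f b)) (x y : V) :
    T.edist (f x) (f y) ≤ G.edist x y := by
  by_cases h : G.edist x y = ⊤
  · simp [h]
  · obtain ⟨p, hp⟩ := exists_walk_of_edist_ne_top h
    rw [← hp]
    have := SimpleGraph.edist_le ((p.map ⟨f, fun h' => hf _ _ h'⟩))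
    simpa using this

private lemma edist_ge_pot {V : Type} {G : SimpleGraph V} (f : V → ℤ)
    (hf : ∀ a b, G.Adj a b → (f a - f b).natAbs ≤ 1) (x y : V) :
    ((f x - f y).natAbs : ℕ∞) ≤ G.edist x y := by
  by_cases h : G.edist x y = ⊤
  · simp [h]
  · obtain ⟨p, hp⟩ := exists_walk_of_edist_ne_top h
    rw [← hp]
    exact_mod_cast Nat.cast_le.mpr (pot_bound f hf p)

private lemma edist_le_of_adj {V : Type} {G : SimpleGraph V} {x y : V} (h : G.Adj x y) :
    G.edist x y ≤ 1 := by
  rw [edist_eq_one_iff_adj.mpr h]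

private def dbRel (p m : ℕ) : (Fin p ⊕ (Fin m ⊕ Fin m)) → (Fin p ⊕ (Fin m ⊕ Fin m)) → Prop :=
  fun x y => match x, y with
  | .inl a, .inl b => (b:ℕ) = a + 1 ∨ (a:ℕ) = b + 1
  | .inl a, .inr (.inl _) => (a:ℕ) = 0
  | .inr (.inl _), .inl a => (a:ℕ) = 0
  | .inl a, .inr (.inr _) => (a:ℕ) = p - 1
  | .inr (.inr _), .inl a => (a:ℕ) = p - 1
  | _, _ => False

private lemma db_adj (p m : ℕ) (x y : Fin p ⊕ (Fin m ⊕ Fin m)) :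
    (doubleBroom p m).Adj x y ↔ dbRel p m x y := by
  rcases x with a|(s|s) <;> rcases y with b|(t|t) <;>
    simp [doubleBroom, fromRel_adj, dbRel] <;> omega

private def bcRel (k m : ℕ) :
    ((Fin (k + 2) ⊕ (Fin m ⊕ Fin m)) ⊕ Fin (k + 1)) →
    ((Fin (k + 2) ⊕ (Fin m ⊕ Fin m)) ⊕ Fin (k + 1)) → Prop :=
  fun x y => match x, y with
  | .inl z, .inl z' => dbRel (k+2) m z z'
  | .inl (.inl a), .inr j => ((a:ℕ) = 0 ∧ (j:ℕ) = 0) ∨ ((a:ℕ) = k + 1 ∧ (j:ℕ) = k)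
  | .inr j, .inl (.inl a) => ((a:ℕ) = 0 ∧ (j:ℕ) = 0) ∨ ((a:ℕ) = k + 1 ∧ (j:ℕ) = k)
  | .inr j, .inr j' => (j':ℕ) = j + 1 ∨ (j:ℕ) = j' + 1
  | _, _ => False

private lemma bc_adj (k m : ℕ) (x y : (Fin (k + 2) ⊕ (Fin m ⊕ Fin m)) ⊕ Fin (k + 1)) :
    (broomCycle k m).Adj x y ↔ bcRel k m x y := by
  have hdb : ∀ z z', (doubleBroom (k+2) m).Adj z z' ↔ dbRel (k+2) m z z' := db_adj (k+2) m
  rcases x with (a|(s|s))|j <;> rcases y with (b|(t|t))|j' <;>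
    simp [broomCycle, fromRel_adj, bcRel, hdb, dbRel] <;> omega

variable (k m : ℕ)

private def phi0 : (Fin (k+3) ⊕ (Fin m ⊕ Fin m)) → ((Fin (k + 2) ⊕ (Fin m ⊕ Fin m)) ⊕ Fin (k + 1)) :=
  fun x => match x with
  | .inl i =>
      if h0 : (i:ℕ) = 0 then .inl (.inl ⟨0, by omega⟩)
      else if hl : (i:ℕ) = k+2 then .inl (.inl ⟨k+1, by omega⟩)
      else .inr ⟨(i:ℕ)-1, by have := i.isLt; omega⟩
  | .inr s => .inl (.inr s)

private def rT1 : ((Fin (k + 2) ⊕ (Fin m ⊕ Fin m)) ⊕ Fin (k + 1)) → (Fin (k+2) ⊕ (Fin m ⊕ Fin m)) :=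
  fun x => match x with
  | .inl z => z
  | .inr j => .inl ⟨(j:ℕ), by omega⟩

private def r1 : ((Fin (k + 2) ⊕ (Fin m ⊕ Fin m)) ⊕ Fin (k + 1)) → (Fin (k+3) ⊕ (Fin m ⊕ Fin m)) :=
  fun x => match x with
  | .inl (.inl a) => if (a:ℕ) = k+1 then .inl ⟨k+2, by omega⟩ else .inl ⟨(a:ℕ), by omega⟩
  | .inl (.inr s) => .inr s
  | .inr j => .inl ⟨(j:ℕ)+1, by omega⟩

private def r2 : ((Fin (k + 2) ⊕ (Fin m ⊕ Fin m)) ⊕ Fin (k + 1)) → (Fin (k+3) ⊕ (Fin m ⊕ Fin m)) :=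
  fun x => match x with
  | .inl (.inl a) => if (a:ℕ) = 0 then .inl ⟨0, by omega⟩ else .inl ⟨(a:ℕ)+1, by omega⟩
  | .inl (.inr s) => .inr s
  | .inr j => .inl ⟨(j:ℕ)+1, by omega⟩

private def gC : ((Fin (k + 2) ⊕ (Fin m ⊕ Fin m)) ⊕ Fin (k + 1)) → ℤ :=
  fun x => match x with
  | .inl (.inl a) => (a:ℤ)
  | .inl (.inr (.inl _)) => 0
  | .inl (.inr (.inr _)) => (k:ℤ)+1
  | .inr j => (j:ℤ)+1

private def gT : (Fin (k+3) ⊕ (Fin m ⊕ Fin m)) → ℤ :=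
  fun x => match x with
  | .inl a => (a:ℤ)
  | .inr (.inl _) => 0
  | .inr (.inr _) => (k:ℤ)+2

private lemma gC_edge : ∀ a b, (broomCycle k m).Adj a b → ((gC k m a) - (gC k m b)).natAbs ≤ 1 := by
  intro x y h
  rw [bc_adj] at h
  rcases x with (a|(s|s))|j <;> rcases y with (b|(t|t))|j' <;>
    simp only [bcRel, dbRel, gC] at h ⊢ <;>
    (try have h1 := a.isLt) <;> (try have h2 := b.isLt) <;>
    (try have h3 := j.isLt) <;> (try have h4 := j'.isLt) <;> omega

private lemma gT_edge : ∀ a b, (doubleBroom (k+3) m).Adj a b → ((gT k m a) - (gT k m b)).natAbs ≤ 1 := by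
  intro x y h
  rw [db_adj] at h
  rcases x with a|(s|s) <;> rcases y with b|(t|t) <;>
    simp only [dbRel, gT] at h ⊢ <;>
    (try have h1 := a.isLt) <;> (try have h2 := b.isLt) <;> omega

private lemma edist_le_one_of_eq_or_adj {V : Type} {G : SimpleGraph V} {x y : V}
    (h : x = y ∨ G.Adj x y) : G.edist x y ≤ 1 := by
  rcases h with rfl | h
  · simp [edist_self]
  · exact edist_le_of_adj h

private lemma rT1_edge : ∀ x y, (broomCycle k m).Adj x y →
    (doubleBroom (k+2) m).edist (rT1 k m x) (rT1 k m y) ≤ 1 := by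
  intro x y h
  rw [bc_adj] at h
  rcases x with (a|(s|s))|j <;> rcases y with (b|(t|t))|j' <;>
    simp only [bcRel, dbRel] at h <;>
    simp only [rT1] <;>
    (try have h3 := j.isLt) <;> (try have h4 := j'.isLt) <;>
  first
    | exact h.elim
    | (apply edist_le_one_of_eq_or_adj
       (try simp only [db_adj, dbRel, Sum.inl.injEq, Sum.inr.injEq, Fin.ext_iff, Fin.val_mk,
         reduceCtorEq, false_or, or_true, true_or, or_false, true_and, and_true, false_and, and_false]) <;> omega)

private lemma r1_edge : ∀ x y, (broomCycle k m).Adj x y →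
    x ≠ .inl (.inl ⟨k, by omega⟩) → y ≠ .inl (.inl ⟨k, by omega⟩) →
    (doubleBroom (k+3) m).edist (r1 k m x) (r1 k m y) ≤ 1 := by
  intro x y h hx hy
  rw [bc_adj] at h
  rcases x with (a|(s|s))|j <;> rcases y with (b|(t|t))|j' <;>
    simp only [bcRel, dbRel] at h <;>
    (try simp only [ne_eq, Sum.inl.injEq, Fin.ext_iff, Fin.val_mk] at hx) <;>
    (try simp only [ne_eq, Sum.inl.injEq, Fin.ext_iff, Fin.val_mk] at hy) <;>
    simp only [r1] <;>
    (try have h1 := a.isLt) <;> (try have h2 := b.isLt) <;>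
    (try have h3 := j.isLt) <;> (try have h4 := j'.isLt) <;>
  first
    | exact h.elim
    | (split_ifs <;>
        (apply edist_le_one_of_eq_or_adj
         (try simp only [db_adj, dbRel, Sum.inl.injEq, Sum.inr.injEq, Fin.ext_iff, Fin.val_mk,
           reduceCtorEq, false_or, or_true, true_or, or_false, true_and, and_true, false_and, and_false]) <;> omega))
    | (apply edist_le_one_of_eq_or_adj
       (try simp only [db_adj, dbRel, Sum.inl.injEq, Sum.inr.injEq, Fin.ext_iff, Fin.val_mk,
         reduceCtorEq, false_or, or_true, true_or, or_false, true_and, and_true, false_and, and_false]) <;> omega)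

private lemma r2_edge : ∀ x y, (broomCycle k m).Adj x y →
    x ≠ .inl (.inl ⟨1, by omega⟩) → y ≠ .inl (.inl ⟨1, by omega⟩) →
    (doubleBroom (k+3) m).edist (r2 k m x) (r2 k m y) ≤ 1 := by
  intro x y h hx hy
  rw [bc_adj] at h
  rcases x with (a|(s|s))|j <;> rcases y with (b|(t|t))|j' <;>
    simp only [bcRel, dbRel] at h <;>
    (try simp only [ne_eq, Sum.inl.injEq, Fin.ext_iff, Fin.val_mk] at hx) <;>
    (try simp only [ne_eq, Sum.inl.injEq, Fin.ext_iff, Fin.val_mk] at hy) <;>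
    simp only [r2] <;>
    (try have h1 := a.isLt) <;> (try have h2 := b.isLt) <;>
    (try have h3 := j.isLt) <;> (try have h4 := j'.isLt) <;>
  first
    | exact h.elim
    | (split_ifs <;>
        (apply edist_le_one_of_eq_or_adj
         (try simp only [db_adj, dbRel, Sum.inl.injEq, Sum.inr.injEq, Fin.ext_iff, Fin.val_mk,
           reduceCtorEq, false_or, or_true, true_or, or_false, true_and, and_true, false_and, and_false]) <;> omega))
    | (apply edist_le_one_of_eq_or_adj
       (try simp only [db_adj, dbRel, Sum.inl.injEq, Sum.inr.injEq, Fin.ext_iff, Fin.val_mk,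
         reduceCtorEq, false_or, or_true, true_or, or_false, true_and, and_true, false_and, and_false]) <;> omega)

private lemma phi0_inj : Function.Injective (phi0 k m) := by
  intro x y hxy
  rcases x with i|s <;> rcases y with i'|s'
  · have hi := i.isLt; have hi' := i'.isLt
    simp only [phi0] at hxy
    split_ifs at hxy <;>
      simp only [Sum.inl.injEq, Sum.inr.injEq, Fin.ext_iff, Fin.val_mk, reduceCtorEq] at hxy <;>
      first
        | exact hxy.elim
        | exact congrArg Sum.inl (Fin.ext (by omega))
  · simp only [phi0] at hxy
    split_ifs at hxy <;> simp at hxy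
  · simp only [phi0] at hxy
    split_ifs at hxy <;> simp at hxy
  · simp only [phi0, Sum.inl.injEq, Sum.inr.injEq] at hxy
    rw [hxy]

private lemma phi0_adj : ∀ u v, (doubleBroom (k+3) m).Adj u v →
    (broomCycle k m).Adj (phi0 k m u) (phi0 k m v) := by
  intro u v h
  rw [db_adj] at h
  rw [bc_adj]
  rcases u with i|(s|s) <;> rcases v with i'|(t|t) <;>
    simp only [dbRel] at h <;>
    (try exact h.elim) <;>
    simp only [phi0] <;>
    (try have hi := i.isLt) <;> (try have hi' := i'.isLt) <;>
    split_ifs <;>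
    (try simp only [bcRel, dbRel, Fin.val_mk, Sum.inl.injEq, Sum.inr.injEq, Fin.ext_iff, true_and, and_true, false_and, and_false, false_or, or_true, true_or, or_false]) <;> (try trivial) <;>
    omega

private lemma phi0_r1 : ∀ x, r1 k m (phi0 k m x) = x := by
  intro x
  rcases x with i|s
  · have hi := i.isLt
    simp only [phi0]
    split_ifs with h0 hl <;> simp only [r1] <;>
      (try split_ifs with h2) <;>
      (try simp only [Fin.val_mk] at h2) <;>
      first
        | exact congrArg Sum.inl (Fin.ext (by simp only [Fin.val_mk]; omega))
        | omega
        | simp_all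
  · rfl

private lemma phi0_r2 : ∀ x, r2 k m (phi0 k m x) = x := by
  intro x
  rcases x with i|s
  · have hi := i.isLt
    simp only [phi0]
    split_ifs with h0 hl <;> simp only [r2] <;>
      (try split_ifs with h2) <;>
      (try simp only [Fin.val_mk] at h2) <;>
      first
        | exact congrArg Sum.inl (Fin.ext (by simp only [Fin.val_mk]; omega))
        | omega
        | simp_all
  · rfl

private lemma phi0_ne_inner : ∀ (x : Fin (k+3) ⊕ (Fin m ⊕ Fin m)) (a : Fin (k+2)),
    1 ≤ (a:ℕ) → (a:ℕ) ≤ k → phi0 k m x ≠ .inl (.inl a) := by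
  intro x a h1 h2
  rcases x with i|s <;> simp only [phi0] <;>
    (try split_ifs) <;>
    simp only [ne_eq, Sum.inl.injEq, Sum.inr.injEq, Fin.ext_iff, Fin.val_mk, reduceCtorEq] <;>
    first | omega | exact not_false

private lemma inl_adj : ∀ u v, (doubleBroom (k+2) m).Adj u v →
    (broomCycle k m).Adj (.inl u) (.inl v) := by
  intro u v h
  rw [db_adj] at h
  rw [bc_adj]
  rcases u with a|(s|s) <;> rcases v with b|(t|t) <;>
    simp only [dbRel] at h <;> simp only [bcRel, dbRel] <;> exact h

private lemma T1_edist (u v : Fin (k+2) ⊕ (Fin m ⊕ Fin m))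
    (hne : (broomCycle k m).edist (.inl u) (.inl v) ≠ ⊤) :
    (doubleBroom (k+2) m).edist u v = (broomCycle k m).edist (.inl u) (.inl v) := by
  refine le_antisymm ?_ (hom_edist_le Sum.inl (inl_adj k m) u v)
  obtain ⟨p, hp⟩ := exists_walk_of_edist_ne_top hne
  rw [← hp]
  have := retract_bound (rT1 k m) p
    (fun a b hab => rT1_edge k m a b (p.adj_of_mem_edges hab))
  simpa [rT1] using this

private lemma T0_edist (u v : Fin (k+3) ⊕ (Fin m ⊕ Fin m))
    (hle : (broomCycle k m).edist (phi0 k m u) (phi0 k m v) ≤ (k:ℕ∞)) :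
    (doubleBroom (k+3) m).edist u v = (broomCycle k m).edist (phi0 k m u) (phi0 k m v) := by
  classical
  have hne : (broomCycle k m).edist (phi0 k m u) (phi0 k m v) ≠ ⊤ :=
    ne_top_of_le_ne_top (by simp) hle
  refine le_antisymm ?_ (hom_edist_le (phi0 k m) (phi0_adj k m) u v)
  obtain ⟨p, hp⟩ := exists_walk_of_edist_ne_top hne
  rw [← hp] at hle ⊢
  have hlen : p.length ≤ k := by exact_mod_cast hle
  rcases Classical.em ((Sum.inl (Sum.inl ⟨k, by omega⟩) :
      (Fin (k + 2) ⊕ (Fin m ⊕ Fin m)) ⊕ Fin (k + 1)) ∈ p.support) with hks | hks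
  · rcases Classical.em ((Sum.inl (Sum.inl ⟨1, by omega⟩) :
        (Fin (k + 2) ⊕ (Fin m ⊕ Fin m)) ⊕ Fin (k + 1)) ∈ p.support) with h1s | h1s
    · -- both inner vertices on the walk: impossible for length ≤ k
      exfalso
      rcases Nat.eq_zero_or_pos k with hk0 | hk1
      · -- k = 0 : the walk has length 0
        subst hk0
        have e1 := Walk.length_takeUntil_le p h1s
        have e2 := Walk.length_takeUntil_le p hks
        have q1 : phi0 0 m u = (Sum.inl (Sum.inl ⟨1, by omega⟩)) :=
          Walk.eq_of_length_eq_zero (p := p.takeUntil _ h1s) (by omega)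
        have q2 : phi0 0 m u = (Sum.inl (Sum.inl ⟨0, by omega⟩)) :=
          Walk.eq_of_length_eq_zero (p := p.takeUntil _ hks) (by omega)
        have q3 := q1.symm.trans q2
        simp [Fin.ext_iff] at q3
      · -- k ≥ 1
        set v1 : (Fin (k + 2) ⊕ (Fin m ⊕ Fin m)) ⊕ Fin (k + 1) :=
          Sum.inl (Sum.inl ⟨1, by omega⟩) with hv1
        set vK : (Fin (k + 2) ⊕ (Fin m ⊕ Fin m)) ⊕ Fin (k + 1) :=
          Sum.inl (Sum.inl ⟨k, by omega⟩) with hvK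
        have hgap : ∀ {x y : (Fin (k + 2) ⊕ (Fin m ⊕ Fin m)) ⊕ Fin (k + 1)}
            (q : (broomCycle k m).Walk x y), x = v1 → y = vK → k - 1 ≤ q.length := by
          intro x y q hx hy
          have := pot_bound (gC k m) (gC_edge k m) q
          subst hx hy
          simp only [gC, hv1, hvK, Fin.val_mk] at this
          omega
        have hgap' : ∀ {x y : (Fin (k + 2) ⊕ (Fin m ⊕ Fin m)) ⊕ Fin (k + 1)}
            (q : (broomCycle k m).Walk x y), x = vK → y = v1 → k - 1 ≤ q.length := by
          intro x y q hx hy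
          have := pot_bound (gC k m) (gC_edge k m) q
          subst hx hy
          simp only [gC, hv1, hvK, Fin.val_mk] at this
          omega
        have hu1 : phi0 k m u ≠ v1 := phi0_ne_inner k m u _ (by simp) (by simp [hv1]; omega)
        have hv1' : phi0 k m v ≠ v1 := phi0_ne_inner k m v _ (by simp) (by simp [hv1]; omega)
        have huK : phi0 k m u ≠ vK := phi0_ne_inner k m u _ (by simp [hvK]; omega) (by simp [hvK])
        have hvK' : phi0 k m v ≠ vK := phi0_ne_inner k m v _ (by simp [hvK]; omega) (by simp [hvK])
        -- split the walk at v1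
        have hsplit := p.take_spec h1s
        have hlenadd : (p.takeUntil v1 h1s).length + (p.dropUntil v1 h1s).length = p.length := by
          rw [← Walk.length_append, hsplit]
        rw [← hsplit] at hks
        rw [Walk.mem_support_append_iff] at hks
        rcases hks with hKA | hKB
        · -- vK on the first part
          set A := p.takeUntil v1 h1s with hA
          have hsplit2 := A.take_spec hKA
          have hlenadd2 : (A.takeUntil vK hKA).length + (A.dropUntil vK hKA).length = A.length := by
            rw [← Walk.length_append, hsplit2]
          have l1 : 1 ≤ (A.takeUntil vK hKA).length := by
            rcases Nat.eq_zero_or_pos (A.takeUntil vK hKA).length with hz | h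
            · exact absurd (Walk.eq_of_length_eq_zero hz) huK
            · exact h
          have l2 : k - 1 ≤ (A.dropUntil vK hKA).length := hgap' _ rfl rfl
          have l3 : 1 ≤ (p.dropUntil v1 h1s).length := by
            rcases Nat.eq_zero_or_pos (p.dropUntil v1 h1s).length with hz | h
            · exact absurd (Walk.eq_of_length_eq_zero hz).symm hv1'
            · exact h
          omega
        · -- vK on the second part
          set B := p.dropUntil v1 h1s with hB
          have hsplit2 := B.take_spec hKB
          have hlenadd2 : (B.takeUntil vK hKB).length + (B.dropUntil vK hKB).length = B.length := by
            rw [← Walk.length_append, hsplit2]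
          have l1 : 1 ≤ (p.takeUntil v1 h1s).length := by
            rcases Nat.eq_zero_or_pos (p.takeUntil v1 h1s).length with hz | h
            · exact absurd (Walk.eq_of_length_eq_zero hz) hu1
            · exact h
          have l2 : k - 1 ≤ (B.takeUntil vK hKB).length := hgap _ rfl rfl
          have l3 : 1 ≤ (B.dropUntil vK hKB).length := by
            rcases Nat.eq_zero_or_pos (B.dropUntil vK hKB).length with hz | h
            · exact absurd (Walk.eq_of_length_eq_zero hz).symm hvK'
            · exact h
          omega
    · -- the walk avoids the inner vertex ⟨1⟩ : use the retraction r2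
      have := retract_bound (r2 k m) p (fun a b hab =>
        r2_edge k m a b (p.adj_of_mem_edges hab)
          (fun ha => h1s (ha ▸ p.fst_mem_support_of_mem_edges hab))
          (fun hb => h1s (hb ▸ p.snd_mem_support_of_mem_edges hab)))
      rw [phi0_r2, phi0_r2] at this
      exact this
  · -- the walk avoids the inner vertex ⟨k⟩ : use the retraction r1
    have := retract_bound (r1 k m) p (fun a b hab =>
      r1_edge k m a b (p.adj_of_mem_edges hab)
        (fun ha => hks (ha ▸ p.fst_mem_support_of_mem_edges hab))
        (fun hb => hks (hb ▸ p.snd_mem_support_of_mem_edges hab)))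
    rw [phi0_r1, phi0_r1] at this
    exact this

private lemma nbr_cover (w : (Fin (k + 2) ⊕ (Fin m ⊕ Fin m)) ⊕ Fin (k + 1))
    (hw1 : w ≠ .inl (.inl ⟨0, by omega⟩)) (hw2 : w ≠ .inl (.inl ⟨k+1, by omega⟩)) :
    ∃ c1 c2, ∀ y, (broomCycle k m).Adj w y → y = c1 ∨ y = c2 := by
  classical
  rcases w with (a|(s|s))|j
  · simp only [ne_eq, Sum.inl.injEq, Fin.ext_iff, Fin.val_mk] at hw1 hw2
    have ha := a.isLt
    refine ⟨.inl (.inl ⟨(a:ℕ)-1, by omega⟩), .inl (.inl ⟨(a:ℕ)+1, by omega⟩), ?_⟩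
    intro y hy
    rw [bc_adj] at hy
    rcases y with (b|(t|t))|j' <;> simp only [bcRel, dbRel] at hy <;>
      (try exact hy.elim) <;>
      simp only [Sum.inl.injEq, Sum.inr.injEq, Fin.ext_iff, Fin.val_mk, reduceCtorEq,
        false_or, or_false, true_or, or_true] <;>
      omega
  · refine ⟨.inl (.inl ⟨0, by omega⟩), .inl (.inl ⟨0, by omega⟩), ?_⟩
    intro y hy
    rw [bc_adj] at hy
    rcases y with (b|(t|t))|j' <;> simp only [bcRel, dbRel] at hy <;>
      (try exact hy.elim) <;>
      simp only [Sum.inl.injEq, Sum.inr.injEq, Fin.ext_iff, Fin.val_mk, reduceCtorEq,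
        false_or, or_false, true_or, or_true] <;>
      omega
  · refine ⟨.inl (.inl ⟨k+1, by omega⟩), .inl (.inl ⟨k+1, by omega⟩), ?_⟩
    intro y hy
    rw [bc_adj] at hy
    rcases y with (b|(t|t))|j' <;> simp only [bcRel, dbRel] at hy <;>
      (try exact hy.elim) <;>
      simp only [Sum.inl.injEq, Sum.inr.injEq, Fin.ext_iff, Fin.val_mk, reduceCtorEq,
        false_or, or_false, true_or, or_true] <;>
      omega
  · have hj := j.isLt
    by_cases hj0 : (j:ℕ) = 0 <;> by_cases hjk : (j:ℕ) = k
    · refine ⟨.inl (.inl ⟨0, by omega⟩), .inl (.inl ⟨k+1, by omega⟩), ?_⟩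
      intro y hy
      rw [bc_adj] at hy
      rcases y with (b|(t|t))|j' <;> simp only [bcRel, dbRel] at hy <;>
        (try exact hy.elim) <;>
        simp only [Sum.inl.injEq, Sum.inr.injEq, Fin.ext_iff, Fin.val_mk, reduceCtorEq,
          false_or, or_false, true_or, or_true] <;>
        omega
    · refine ⟨.inl (.inl ⟨0, by omega⟩), .inr ⟨(j:ℕ)+1, by omega⟩, ?_⟩
      intro y hy
      rw [bc_adj] at hy
      rcases y with (b|(t|t))|j' <;> simp only [bcRel, dbRel] at hy <;>
        (try exact hy.elim) <;>
        simp only [Sum.inl.injEq, Sum.inr.injEq, Fin.ext_iff, Fin.val_mk, reduceCtorEq,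
          false_or, or_false, true_or, or_true] <;>
        omega
    · refine ⟨.inr ⟨(j:ℕ)-1, by omega⟩, .inl (.inl ⟨k+1, by omega⟩), ?_⟩
      intro y hy
      rw [bc_adj] at hy
      rcases y with (b|(t|t))|j' <;> simp only [bcRel, dbRel] at hy <;>
        (try exact hy.elim) <;>
        simp only [Sum.inl.injEq, Sum.inr.injEq, Fin.ext_iff, Fin.val_mk, reduceCtorEq,
          false_or, or_false, true_or, or_true] <;>
        omega
    · refine ⟨.inr ⟨(j:ℕ)-1, by omega⟩, .inr ⟨(j:ℕ)+1, by omega⟩, ?_⟩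
      intro y hy
      rw [bc_adj] at hy
      rcases y with (b|(t|t))|j' <;> simp only [bcRel, dbRel] at hy <;>
        (try exact hy.elim) <;>
        simp only [Sum.inl.injEq, Sum.inr.injEq, Fin.ext_iff, Fin.val_mk, reduceCtorEq,
          false_or, or_false, true_or, or_true] <;>
        omega

private lemma img_center (φ : (Fin (k+3) ⊕ (Fin m ⊕ Fin m)) →
      ((Fin (k + 2) ⊕ (Fin m ⊕ Fin m)) ⊕ Fin (k + 1)))
    (hm2 : 2 ≤ m) (hinj : Function.Injective φ)
    (hadj : ∀ u v, (doubleBroom (k+3) m).Adj u v → (broomCycle k m).Adj (φ u) (φ v))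
    (i : Fin (k+3)) (hi : (i:ℕ) = 0 ∨ (i:ℕ) = k+2) :
    φ (.inl i) = .inl (.inl ⟨0, by omega⟩) ∨ φ (.inl i) = .inl (.inl ⟨k+1, by omega⟩) := by
  by_contra hc
  push_neg at hc
  obtain ⟨c1, c2, hcov⟩ := nbr_cover k m _ hc.1 hc.2
  rcases hi with h0 | h2
  · have a1 : (doubleBroom (k+3) m).Adj (.inl i) (.inl ⟨1, by omega⟩) := by
      rw [db_adj]; simp only [dbRel, Fin.val_mk]; omega
    have a2 : (doubleBroom (k+3) m).Adj (.inl i) (.inr (.inl ⟨0, by omega⟩)) := by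
      rw [db_adj]; simp only [dbRel, Fin.val_mk]; omega
    have a3 : (doubleBroom (k+3) m).Adj (.inl i) (.inr (.inl ⟨1, by omega⟩)) := by
      rw [db_adj]; simp only [dbRel, Fin.val_mk]; omega
    have e1 := hcov _ (hadj _ _ a1)
    have e2 := hcov _ (hadj _ _ a2)
    have e3 := hcov _ (hadj _ _ a3)
    have d12 : φ (.inl ⟨1, by omega⟩) ≠ φ (.inr (.inl ⟨0, by omega⟩)) := by
      intro h; have := hinj h; simp at this
    have d13 : φ (.inl ⟨1, by omega⟩) ≠ φ (.inr (.inl ⟨1, by omega⟩)) := by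
      intro h; have := hinj h; simp at this
    have d23 : φ (.inr (.inl ⟨0, by omega⟩)) ≠ φ (.inr (.inl ⟨1, by omega⟩)) := by
      intro h; have := hinj h; simp [Fin.ext_iff] at this
    rcases e1 with h1|h1 <;> rcases e2 with h2|h2 <;> rcases e3 with h3|h3 <;>
      first
        | exact d12 (h1.trans h2.symm)
        | exact d13 (h1.trans h3.symm)
        | exact d23 (h2.trans h3.symm)
  · have a1 : (doubleBroom (k+3) m).Adj (.inl i) (.inl ⟨k+1, by omega⟩) := by
      rw [db_adj]; simp only [dbRel, Fin.val_mk]; omega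
    have a2 : (doubleBroom (k+3) m).Adj (.inl i) (.inr (.inr ⟨0, by omega⟩)) := by
      rw [db_adj]; simp only [dbRel, Fin.val_mk]; omega
    have a3 : (doubleBroom (k+3) m).Adj (.inl i) (.inr (.inr ⟨1, by omega⟩)) := by
      rw [db_adj]; simp only [dbRel, Fin.val_mk]; omega
    have e1 := hcov _ (hadj _ _ a1)
    have e2 := hcov _ (hadj _ _ a2)
    have e3 := hcov _ (hadj _ _ a3)
    have d12 : φ (.inl ⟨k+1, by omega⟩) ≠ φ (.inr (.inr ⟨0, by omega⟩)) := by
      intro h; have := hinj h; simp at this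
    have d13 : φ (.inl ⟨k+1, by omega⟩) ≠ φ (.inr (.inr ⟨1, by omega⟩)) := by
      intro h; have := hinj h; simp at this
    have d23 : φ (.inr (.inr ⟨0, by omega⟩)) ≠ φ (.inr (.inr ⟨1, by omega⟩)) := by
      intro h; have := hinj h; simp [Fin.ext_iff] at this
    rcases e1 with h1|h1 <;> rcases e2 with h2|h2 <;> rcases e3 with h3|h3 <;>
      first
        | exact d12 (h1.trans h2.symm)
        | exact d13 (h1.trans h3.symm)
        | exact d23 (h2.trans h3.symm)

private lemma edist_centers : ∀ j, (hj : j ≤ k+1) →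
    (broomCycle k m).edist (.inl (.inl ⟨0, by omega⟩)) (.inl (.inl ⟨j, by omega⟩)) ≤ (j:ℕ∞) := by
  intro j
  induction j with
  | zero => intro _; simp [edist_self]
  | succ n ih =>
    intro hj
    have h1 := ih (by omega)
    have hadj : (broomCycle k m).Adj (.inl (.inl ⟨n, by omega⟩)) (.inl (.inl ⟨n+1, by omega⟩)) := by
      rw [bc_adj]; simp only [bcRel, dbRel, Fin.val_mk, true_or, or_true]
    calc (broomCycle k m).edist (.inl (.inl ⟨0, by omega⟩)) (.inl (.inl ⟨n+1, by omega⟩))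
        ≤ (broomCycle k m).edist (.inl (.inl ⟨0, by omega⟩)) (.inl (.inl ⟨n, by omega⟩)) +
          (broomCycle k m).edist (.inl (.inl ⟨n, by omega⟩)) (.inl (.inl ⟨n+1, by omega⟩)) :=
          SimpleGraph.edist_triangle
      _ ≤ (n:ℕ∞) + 1 := add_le_add h1 (edist_le_of_adj hadj)
      _ = ((n+1 : ℕ):ℕ∞) := by push_cast; ring

private lemma T0_far :
    ((k+2 : ℕ) : ℕ∞) ≤ (doubleBroom (k+3) m).edist (.inl ⟨0, by omega⟩) (.inl ⟨k+2, by omega⟩) := by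
  have := edist_ge_pot (gT k m) (gT_edge k m) (.inl ⟨0, by omega⟩) (.inl ⟨k+2, by omega⟩)
  have hval : ((gT k m (.inl ⟨0, by omega⟩)) - (gT k m (.inl ⟨k+2, by omega⟩))).natAbs = k+2 := by
    simp only [gT, Fin.val_mk]; omega
  rwa [hval] at this

/-- With `n ≥ 8`, `0 ≤ k ≤ n - 7` and `m = ⌊(n-k-3)/2⌋`, the graph
`C(k)` has `|V(T₁(k))| + k + 1` vertices, is `k`-isometric-universal for
`{T₀(k), T₁(k)}`, but is not `(k+1)`-isometric-universal for `{T₀(k), T₁(k)}`. -/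
theorem stmt_13 (n k : ℕ) (hn : 8 ≤ n) (hk : k ≤ n - 7) (m : ℕ)
    (hm : m = (n - k - 3) / 2) :
    Nat.card ((Fin (k + 2) ⊕ (Fin m ⊕ Fin m)) ⊕ Fin (k + 1)) =
      Nat.card (Fin (k + 2) ⊕ (Fin m ⊕ Fin m)) + k + 1 ∧
    IsKIsoUniversalPair k (doubleBroom (k + 3) m) (doubleBroom (k + 2) m)
      (broomCycle k m) ∧
    ¬ IsKIsoUniversalPair (k + 1) (doubleBroom (k + 3) m) (doubleBroom (k + 2) m)
      (broomCycle k m) := by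
  have hm2 : 2 ≤ m := by omega
  refine ⟨?_, ⟨⟨phi0 k m, phi0_inj k m, phi0_adj k m, fun u v h => T0_edist k m u v h⟩,
    ⟨Sum.inl, Sum.inl_injective, inl_adj k m,
      fun u v h => T1_edist k m u v (ne_top_of_le_ne_top (by simp) h)⟩⟩, ?_⟩
  · simp [Nat.card_sum]; omega
  · rintro ⟨⟨φ, hinj, hadj, hd⟩, -⟩
    have h0 := img_center k m φ hm2 hinj hadj ⟨0, by omega⟩ (Or.inl rfl)
    have hL := img_center k m φ hm2 hinj hadj ⟨k+2, by omega⟩ (Or.inr rfl)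
    have hne : φ (.inl ⟨0, by omega⟩) ≠ φ (.inl ⟨k+2, by omega⟩) := by
      intro h
      have := hinj h
      simp [Fin.ext_iff] at this
    have hdist : (broomCycle k m).edist (φ (.inl ⟨0, by omega⟩)) (φ (.inl ⟨k+2, by omega⟩)) ≤
        ((k+1 : ℕ) : ℕ∞) := by
      rcases h0 with h0|h0 <;> rcases hL with hL|hL
      · exact absurd (h0.trans hL.symm) hne
      · rw [h0, hL]
        exact edist_centers k m (k+1) le_rfl
      · rw [h0, hL, SimpleGraph.edist_comm]
        exact edist_centers k m (k+1) le_rfl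
      · exact absurd (h0.trans hL.symm) hne
    have heq := hd (.inl ⟨0, by omega⟩) (.inl ⟨k+2, by omega⟩) (by exact_mod_cast hdist)
    have hfar := T0_far k m
    rw [heq] at hfar
    have := hfar.trans hdist
    have := Nat.cast_le.mp this
    omega
end

section
/- Let A1 and A2 be trees that are isometric subgraphs of a graph U with U = A1 ∪ A2 (every vertex and edge of U belongs to A1 or to A2), and suppose U contains a cycle; let C be a shortest cycle of U. Then the edges of C can be partitioned into two paths P1 and P2 sharing exactly two vertices u and v, such that u, v ∈ V(A1) ∩ V(A2), every vertex and edge of P1 other than u and v belongs to A1 but not to A2, every vertex and edge of P2 other than u and v belongs to A2 but not to A1, and P1 and P2 both have length dist_U(u,v) (so C has length 2·dist_U(u,v)). -/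
open SimpleGraph

namespace Stmt15Aux

variable {V : Type} {U : SimpleGraph V}

lemma mem_head_append {α : Type*} {l₁ l₂ t : List α} {x : α}
    (h : l₁ ++ l₂ = x :: t) (h₁ : l₁ ≠ []) : x ∈ l₁ := by
  cases l₁ with
  | nil => exact absurd rfl h₁
  | cons a s =>
    simp only [List.cons_append, List.cons.injEq] at h
    exact h.1 ▸ List.mem_cons_self

lemma edges_ne_nil {a b : V} (W : U.Walk a b) (h : a ≠ b) : W.edges ≠ [] := by
  cases W with
  | nil => exact absurd rfl h
  | cons h p => simp [Walk.edges_cons]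

lemma lift_walk {H : U.Subgraph} :
    ∀ {a b : V} (W : U.Walk a b) (_ : ∀ e ∈ W.edges, e ∈ H.edgeSet)
      (ha : a ∈ H.verts) (hb : b ∈ H.verts),
      ∃ W' : H.coe.Walk ⟨a, ha⟩ ⟨b, hb⟩, W'.map H.hom = W
  | _, _, Walk.nil, _, _, _ => ⟨Walk.nil, rfl⟩
  | a, b, @Walk.cons _ _ _ c _ h p, hW, ha, hb => by
    have he : H.Adj a c := Subgraph.mem_edgeSet.mp (hW s(a, c) (by simp [Walk.edges_cons]))
    obtain ⟨W', hW'⟩ := lift_walk p (fun e he' => hW e (by simp [Walk.edges_cons, he']))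
      he.snd_mem hb
    exact ⟨Walk.cons (by exact he) W', by rw [← hW']; rfl⟩

lemma edges_of_support {H : U.Subgraph}
    (hind : ∀ ⦃p q : V⦄, p ∈ H.verts → q ∈ H.verts → U.Adj p q → H.Adj p q)
    {a b : V} (W : U.Walk a b) (hsupp : ∀ w ∈ W.support, w ∈ H.verts) :
    ∀ e ∈ W.edges, e ∈ H.edgeSet := by
  intro e
  induction e using Sym2.ind with
  | _ x y =>
    intro he
    exact Subgraph.mem_edgeSet.mpr (hind (hsupp x (W.fst_mem_support_of_mem_edges he))
      (hsupp y (W.snd_mem_support_of_mem_edges he)) (W.adj_of_mem_edges he))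

lemma support_subset_verts {H : U.Subgraph} :
    ∀ {a b : V} (W : U.Walk a b) (_ : ∀ e ∈ W.edges, e ∈ H.edgeSet) (_ : a ∈ H.verts),
      ∀ w ∈ W.support, w ∈ H.verts
  | _, _, Walk.nil, _, ha => by
    intro w hw
    simp only [Walk.support_nil, List.mem_singleton] at hw
    exact hw ▸ ha
  | a, b, @Walk.cons _ _ _ c _ h p, hW, ha => by
    have he : H.Adj a c := Subgraph.mem_edgeSet.mp (hW s(a, c) (by simp [Walk.edges_cons]))
    intro w hw
    rcases (by simpa [Walk.support_cons] using hw : w = a ∨ w ∈ p.support) with rfl | hw'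
    · exact ha
    · exact support_subset_verts p (fun e he' => hW e (by simp [Walk.edges_cons, he']))
        he.snd_mem w hw'

lemma no_cycle {H : U.Subgraph} (htree : H.coe.IsTree)
    (hind : ∀ ⦃p q : V⦄, p ∈ H.verts → q ∈ H.verts → U.Adj p q → H.Adj p q)
    {y : V} (W : U.Walk y y) (hW : W.IsCycle)
    (hsupp : ∀ w ∈ W.support, w ∈ H.verts) : False := by
  have hy : y ∈ H.verts := hsupp y W.start_mem_support
  obtain ⟨W', hW'⟩ := lift_walk W (edges_of_support hind W hsupp) hy hy
  exact htree.IsAcyclic _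
    ((Walk.map_isCycle_iff_of_injective Subtype.val_injective).mp (hW' ▸ hW))

lemma path_length_eq {H : U.Subgraph} (htree : H.coe.IsTree)
    (hiso : ∀ u v : H.verts, H.coe.edist u v = U.edist u.val v.val)
    {a b : V} (W : U.Walk a b) (hp : W.IsPath)
    (hWE : ∀ e ∈ W.edges, e ∈ H.edgeSet) (ha : a ∈ H.verts) (hb : b ∈ H.verts) :
    (W.length : ℕ∞) = U.edist a b := by
  classical
  obtain ⟨W', hW'⟩ := lift_walk W hWE ha hb
  have hW'p : W'.IsPath :=
    (Walk.map_isPath_iff_of_injective Subtype.val_injective).mp (hW' ▸ hp)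
  obtain ⟨p₀, hp₀⟩ :=
    (htree.isConnected.preconnected ⟨a, ha⟩ ⟨b, hb⟩).exists_walk_length_eq_edist
  have hble : (p₀.bypass.length : ℕ∞) ≤ H.coe.edist ⟨a, ha⟩ ⟨b, hb⟩ := by
    rw [← hp₀]
    exact_mod_cast Nat.cast_le.mpr p₀.length_bypass_le
  have hbeq : (p₀.bypass.length : ℕ∞) = H.coe.edist ⟨a, ha⟩ ⟨b, hb⟩ :=
    le_antisymm hble (SimpleGraph.edist_le _)
  have huniq : (⟨W', hW'p⟩ : H.coe.Path _ _) = ⟨p₀.bypass, p₀.bypass_isPath⟩ :=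
    htree.IsAcyclic.path_unique _ _
  have hlen : W'.length = p₀.bypass.length := by
    have := congrArg (fun q : H.coe.Path _ _ => q.val.length) huniq
    simpa using this
  have hWlen : W.length = W'.length := by
    rw [← hW']; exact Walk.length_map _ _
  rw [hWlen, hlen, hbeq, hiso ⟨a, ha⟩ ⟨b, hb⟩]

lemma exists_geodesic {H : U.Subgraph} (htree : H.coe.IsTree)
    (hiso : ∀ u v : H.verts, H.coe.edist u v = U.edist u.val v.val)
    {a b : V} (ha : a ∈ H.verts) (hb : b ∈ H.verts) :
    ∃ T : U.Walk a b, T.IsPath ∧ (∀ e ∈ T.edges, e ∈ H.edgeSet) ∧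
      (T.length : ℕ∞) = U.edist a b := by
  classical
  obtain ⟨w⟩ := htree.isConnected.preconnected ⟨a, ha⟩ ⟨b, hb⟩
  have hpath : (w.bypass.map H.hom).IsPath :=
    (Walk.map_isPath_iff_of_injective Subtype.val_injective).mpr w.bypass_isPath
  have hE : ∀ e ∈ (w.bypass.map H.hom).edges, e ∈ H.edgeSet := by
    intro e he
    rw [Walk.edges_map] at he
    obtain ⟨e', he', rfl⟩ := List.mem_map.mp he
    revert he'
    induction e' using Sym2.ind with
    | _ x y =>
      intro he'
      have : H.coe.Adj x y := w.bypass.adj_of_mem_edges he'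
      exact Subgraph.mem_edgeSet.mpr (by exact this)
  exact ⟨w.bypass.map H.hom, hpath, hE,
    path_length_eq htree hiso _ hpath hE ha hb⟩

lemma not_diag_of_mem_edges {a b : V} (p : U.Walk a b) {e : Sym2 V} (he : e ∈ p.edges) :
    ¬ e.IsDiag := by
  revert he
  induction e using Sym2.ind with
  | _ x y =>
    intro he hd
    exact (p.adj_of_mem_edges he).ne (Sym2.mk_isDiag_iff.mp hd)

lemma cyc_bound {x : V} {C : U.Walk x x}
    (hCmin : ∀ (y : V) (C' : U.Walk y y), C'.IsCycle → C.length ≤ C'.length)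
    {a b : V} (p₁ p₂ : U.Walk a b) (h₁ : p₁.IsPath) (h₂ : p₂.IsPath)
    {e : Sym2 V} (he₁ : e ∈ p₁.edges) (he₂ : e ∉ p₂.edges) :
    C.length ≤ p₁.length + p₂.length := by
  classical
  set S : Set (Sym2 V) := {e | e ∈ p₁.edges ∨ e ∈ p₂.edges} with hS
  set H : SimpleGraph V := SimpleGraph.fromEdgeSet S with hH
  have hsub : ∀ {c d : V} (p : U.Walk c d), (∀ e' ∈ p.edges, e' ∈ S) →
      ∀ e' ∈ p.edges, e' ∈ H.edgeSet := by
    intro c d p hp e' he'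
    rw [hH, edgeSet_fromEdgeSet]
    exact ⟨hp e' he', not_diag_of_mem_edges p he'⟩
  have h₁E : ∀ e' ∈ p₁.edges, e' ∈ H.edgeSet := hsub p₁ (fun e' he' => Or.inl he')
  have h₂E : ∀ e' ∈ p₂.edges, e' ∈ H.edgeSet := hsub p₂ (fun e' he' => Or.inr he')
  have hne : p₁.transfer H h₁E ≠ p₂.transfer H h₂E := by
    intro h
    apply he₂
    rw [← p₂.edges_transfer h₂E, ← h, p₁.edges_transfer h₁E]
    exact he₁
  have hnacyc : ¬ H.IsAcyclic := by
    intro hacyc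
    have := hacyc.path_unique ⟨p₁.transfer H h₁E, h₁.transfer h₁E⟩
      ⟨p₂.transfer H h₂E, h₂.transfer h₂E⟩
    exact hne (congrArg Subtype.val this)
  rw [SimpleGraph.IsAcyclic] at hnacyc
  push_neg at hnacyc
  obtain ⟨y, c, hc⟩ := hnacyc
  have hcE : ∀ e' ∈ c.edges, e' ∈ U.edgeSet := by
    intro e' he'
    have h1 : e' ∈ H.edgeSet := c.edges_subset_edgeSet he'
    rw [hH, edgeSet_fromEdgeSet] at h1
    rcases h1.1 with h | h
    · exact p₁.edges_subset_edgeSet h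
    · exact p₂.edges_subset_edgeSet h
  have hcyc : (c.transfer U hcE).IsCycle := hc.transfer hcE
  have h1 := hCmin y (c.transfer U hcE) hcyc
  rw [Walk.length_transfer] at h1
  refine h1.trans ?_
  have hnodup : c.edges.Nodup := hc.isCircuit.isTrail.edges_nodup
  have hsubl : c.edges.toFinset ⊆ (p₁.edges ++ p₂.edges).toFinset := by
    intro e' he'
    rw [List.mem_toFinset] at he'
    have h1 : e' ∈ H.edgeSet := c.edges_subset_edgeSet he'
    rw [hH, edgeSet_fromEdgeSet] at h1
    rw [List.mem_toFinset, List.mem_append]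
    exact h1.1
  calc c.length = c.edges.length := (Walk.length_edges c).symm
    _ = c.edges.toFinset.card := (List.toFinset_card_of_nodup hnodup).symm
    _ ≤ (p₁.edges ++ p₂.edges).toFinset.card := Finset.card_le_card hsubl
    _ ≤ (p₁.edges ++ p₂.edges).length := List.toFinset_card_le _
    _ = p₁.length + p₂.length := by
        rw [List.length_append, Walk.length_edges, Walk.length_edges]

lemma first_exit {S : Set V} :
    ∀ {a b : V} (W : U.Walk a b) (_ : a ∈ S) (_ : b ∉ S),
      ∃ (c d : V) (W₁ : U.Walk a c) (h : U.Adj c d) (W₂ : U.Walk d b),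
        W = W₁.append (Walk.cons h W₂) ∧ (∀ x ∈ W₁.support, x ∈ S) ∧ d ∉ S := by
  intro a b W
  induction W with
  | nil => intro ha hb; exact absurd ha hb
  | cons h p ih =>
    intro ha hb
    rename_i u c b'
    by_cases hc : c ∈ S
    · obtain ⟨c', d, W₁, h', W₂, heq, hsupp, hd⟩ := ih hc hb
      refine ⟨c', d, Walk.cons h W₁, h', W₂, by rw [heq, Walk.cons_append], ?_, hd⟩
      intro x hx
      rcases (by simpa [Walk.support_cons] using hx : x = u ∨ x ∈ W₁.support) with rfl | hx'
      · exact ha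
      · exact hsupp x hx'
    · refine ⟨u, c, Walk.nil, h, p, by rw [Walk.nil_append], ?_, hc⟩
      intro x hx
      simp only [Walk.support_nil, List.mem_singleton] at hx
      exact hx ▸ ha

end Stmt15Aux

open Stmt15Aux

/-- Let `A₁, A₂` be trees that are isometric subgraphs of `U` with
`U = A₁ ∪ A₂`, and let `C` be a shortest cycle of `U`. Then the edges of `C` can be
partitioned into two paths `P₁, P₂` sharing exactly the two vertices `u ≠ v`, with
`u, v ∈ V(A₁) ∩ V(A₂)`, all vertices of `P₁` other than `u, v` and all edges of `P₁`
lying in `A₁` but not in `A₂`, all vertices of `P₂` other than `u, v` and all edges of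
`P₂` lying in `A₂` but not in `A₁`, and both `P₁` and `P₂` of length `dist_U(u,v)`
(so `C` has length `2 · dist_U(u,v)`). -/
theorem stmt_15 {V : Type} [Finite V] (U : SimpleGraph V) (A₁ A₂ : U.Subgraph)
    (h₁tree : A₁.coe.IsTree) (h₂tree : A₂.coe.IsTree)
    (h₁iso : ∀ u v : A₁.verts, A₁.coe.edist u v = U.edist u.val v.val)
    (h₂iso : ∀ u v : A₂.verts, A₂.coe.edist u v = U.edist u.val v.val)
    (hcover : A₁ ⊔ A₂ = ⊤)
    (x : V) (C : U.Walk x x) (hC : C.IsCycle)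
    (hCmin : ∀ (y : V) (C' : U.Walk y y), C'.IsCycle → C.length ≤ C'.length) :
    ∃ (u v : V) (P₁ P₂ : U.Walk u v), u ≠ v ∧ P₁.IsPath ∧ P₂.IsPath ∧
      (∀ e, e ∈ C.edges ↔ (e ∈ P₁.edges ∨ e ∈ P₂.edges)) ∧
      (∀ e, e ∈ P₁.edges → e ∉ P₂.edges) ∧
      (∀ w, w ∈ P₁.support → w ∈ P₂.support → w = u ∨ w = v) ∧
      u ∈ A₁.verts ∧ u ∈ A₂.verts ∧ v ∈ A₁.verts ∧ v ∈ A₂.verts ∧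
      (∀ w ∈ P₁.support, w ≠ u → w ≠ v → w ∈ A₁.verts ∧ w ∉ A₂.verts) ∧
      (∀ e ∈ P₁.edges, e ∈ A₁.edgeSet ∧ e ∉ A₂.edgeSet) ∧
      (∀ w ∈ P₂.support, w ≠ u → w ≠ v → w ∈ A₂.verts ∧ w ∉ A₁.verts) ∧
      (∀ e ∈ P₂.edges, e ∈ A₂.edgeSet ∧ e ∉ A₁.edgeSet) ∧
      (P₁.length : ℕ∞) = U.edist u v ∧ (P₂.length : ℕ∞) = U.edist u v ∧
      C.length = 2 * P₁.length := by
  classical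
  -- inducedness of the two subgraphs
  have hind : ∀ (A : U.Subgraph), (∀ u v : A.verts, A.coe.edist u v = U.edist u.val v.val) →
      ∀ ⦃p q : V⦄, p ∈ A.verts → q ∈ A.verts → U.Adj p q → A.Adj p q := by
    intro A hiso p q hp hq h
    have h1 : U.edist p q = 1 := edist_eq_one_iff_adj.mpr h
    have h2 : A.coe.edist ⟨p, hp⟩ ⟨q, hq⟩ = 1 := by rw [hiso ⟨p, hp⟩ ⟨q, hq⟩, h1]
    exact edist_eq_one_iff_adj.mp h2
  have hind₁ := hind A₁ h₁iso
  have hind₂ := hind A₂ h₂iso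
  have hvert : ∀ w : V, w ∈ A₁.verts ∨ w ∈ A₂.verts := by
    intro w
    have h1 : w ∈ (A₁ ⊔ A₂).verts := by rw [hcover]; exact Set.mem_univ w
    simpa [Subgraph.verts_sup] using h1
  have hedge : ∀ ⦃p q : V⦄, U.Adj p q → A₁.Adj p q ∨ A₂.Adj p q := by
    intro p q h
    have h1 : (A₁ ⊔ A₂).Adj p q := by rw [hcover]; exact Subgraph.top_adj.mpr h
    exact Subgraph.sup_adj.mp h1
  -- every cycle leaves each tree
  have hoff : ∀ (A : U.Subgraph), A.coe.IsTree →
      (∀ ⦃p q : V⦄, p ∈ A.verts → q ∈ A.verts → U.Adj p q → A.Adj p q) →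
      ∀ {y : V} (W : U.Walk y y), W.IsCycle → ∃ w ∈ W.support, w ∉ A.verts := by
    intro A htree hindA y W hW
    by_contra hall
    push_neg at hall
    exact no_cycle htree hindA W hW hall
  obtain ⟨a, haC, ha1⟩ := hoff A₁ h₁tree hind₁ C hC
  have ha2 : a ∈ A₂.verts := (hvert a).resolve_left ha1
  set C' := C.rotate a haC with hC'def
  have hC'cyc : C'.IsCycle := hC.rotate haC
  obtain ⟨b, hbC, hb2⟩ := hoff A₂ h₂tree hind₂ C' hC'cyc
  have hb1 : b ∈ A₁.verts := (hvert b).resolve_right hb2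
  set W₁ := C'.takeUntil b hbC with hW₁def
  set W₂ := C'.dropUntil b hbC with hW₂def
  have hsplit : W₁.append W₂ = C' := C'.take_spec hbC
  obtain ⟨v, v₁, pw, hvv₁, rest, hW₂eq, hpw, hv₁⟩ := first_exit W₂ hb1 ha1
  obtain ⟨u, u₁, qw, huu₁, rw', hW₁eq, hqw, hu₁⟩ := first_exit W₁.reverse hb1 ha1
  have hW₁eq' : W₁ = ((Walk.cons huu₁ rw').reverse).append qw.reverse := by
    have h1 := congrArg Walk.reverse hW₁eq
    rw [Walk.reverse_reverse, Walk.reverse_append] at h1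
    exact h1
  set P : U.Walk u v := qw.reverse.append pw with hPdef
  set Q : U.Walk v u := (Walk.cons hvv₁ rest).append (Walk.cons huu₁ rw').reverse with hQdef
  -- edge decomposition
  have hCedges : ∀ e, e ∈ C.edges ↔ (e ∈ P.edges ∨ e ∈ Q.edges) := by
    intro e
    have h1 : e ∈ C'.edges ↔ e ∈ C.edges := (C.rotate_edges a haC).mem_iff
    rw [← h1, ← hsplit, hW₁eq', hW₂eq, hPdef, hQdef]
    simp only [Walk.edges_append, Walk.edges_reverse, Walk.edges_cons, List.mem_append,
      List.mem_reverse, List.mem_cons]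
    tauto
  -- length decomposition
  have hlenC : C.length = C'.length := by
    have h := (C.rotate_edges a haC).perm.length_eq
    rw [Walk.length_edges, Walk.length_edges] at h
    exact h.symm
  have hlen1 : C'.length = W₁.length + W₂.length := by
    rw [← hsplit, Walk.length_append]
  have hlenW₁ : W₁.length = (rw'.length + 1) + qw.length := by
    rw [hW₁eq', Walk.length_append, Walk.length_reverse, Walk.length_reverse, Walk.length_cons]
  have hlenW₂ : W₂.length = pw.length + (rest.length + 1) := by
    rw [hW₂eq, Walk.length_append, Walk.length_cons]
  have hlenP : P.length = qw.length + pw.length := by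
    rw [hPdef, Walk.length_append, Walk.length_reverse]
  have hlenQ : Q.length = (rest.length + 1) + (rw'.length + 1) := by
    rw [hQdef, Walk.length_append, Walk.length_cons, Walk.length_reverse, Walk.length_cons]
  have hglen : C.length = P.length + Q.length := by omega
  -- P support
  have hPsup : ∀ w ∈ P.support, w ∈ A₁.verts := by
    intro w hw
    rw [hPdef, Walk.mem_support_append_iff] at hw
    rcases hw with hw | hw
    · exact hqw w (by rwa [Walk.support_reverse, List.mem_reverse] at hw)
    · exact hpw w hw
  have hbP : b ∈ P.support := by
    rw [hPdef, Walk.mem_support_append_iff]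
    exact Or.inl qw.reverse.end_mem_support
  -- support decomposition of the cycle
  have hconsrevtail : ((Walk.cons huu₁ rw').reverse.support).tail
      = rw'.support.reverse.tail ++ [u] := by
    rw [Walk.support_reverse, Walk.support_cons, List.reverse_cons,
      List.tail_append_of_ne_nil (by simp [rw'.support_ne_nil])]
  have hCsup : C'.support.tail =
      ((rw'.support.reverse.tail ++ [u]) ++ qw.reverse.support.tail)
        ++ (pw.support.tail ++ rest.support) := by
    rw [← hsplit, Walk.tail_support_append, hW₁eq', hW₂eq,
      Walk.tail_support_append, Walk.tail_support_append, hconsrevtail,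
      Walk.support_cons, List.tail_cons]
  have hN := hC'cyc.support_nodup
  rw [hCsup] at hN
  obtain ⟨hX, hY, hXY⟩ := List.nodup_append.mp hN
  obtain ⟨hLAu, hLB, hLAuLB⟩ := List.nodup_append.mp hX
  obtain ⟨hLC, hLE, hLCLE⟩ := List.nodup_append.mp hY
  have hPsupEq : P.support = (u :: qw.reverse.support.tail) ++ pw.support.tail := by
    rw [hPdef, ← Walk.support_eq_cons qw.reverse, Walk.support_append]
  have hPpath : P.IsPath := by
    rw [Walk.isPath_def, hPsupEq]
    have hs : List.Sublist (([u] ++ qw.reverse.support.tail) ++ pw.support.tail)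
        (((rw'.support.reverse.tail ++ [u]) ++ qw.reverse.support.tail)
          ++ (pw.support.tail ++ rest.support)) :=
      ((List.sublist_append_right rw'.support.reverse.tail [u]).append_right
        qw.reverse.support.tail).append (List.sublist_append_left _ _)
    exact hN.sublist hs
  have hu1 : u ∈ A₁.verts := hPsup u P.start_mem_support
  have hv1 : v ∈ A₁.verts := hPsup v P.end_mem_support
  have hPE1 : ∀ e ∈ P.edges, e ∈ A₁.edgeSet := edges_of_support hind₁ P hPsup
  have hβ : (P.length : ℕ∞) = U.edist u v :=
    path_length_eq h₁tree h₁iso P hPpath hPE1 hu1 hv1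
  have hP1 : 1 ≤ P.length := by
    by_contra h
    push_neg at h
    have hq0 : qw.length = 0 := by omega
    have hp0 : pw.length = 0 := by omega
    have hbv : b = v := Walk.eq_of_length_eq_zero hp0
    have hadj' : U.Adj b v₁ := by rw [hbv]; exact hvv₁
    rcases hedge hadj' with h' | h'
    · exact hv₁ h'.snd_mem
    · exact hb2 h'.fst_mem
  have huv : u ≠ v := by
    intro h
    have h0 : U.edist u v = 0 := by rw [h]; exact SimpleGraph.edist_self
    have h1 : P.length = 0 := by exact_mod_cast hβ.trans h0
    omega
  have hv2 : v ∈ A₂.verts := ((hedge hvv₁).resolve_left (fun h => hv₁ h.snd_mem)).fst_mem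
  have hu2 : u ∈ A₂.verts := ((hedge huu₁).resolve_left (fun h => hu₁ h.snd_mem)).fst_mem
  -- Q is a path
  have hQsupEq : Q.support = (v :: rest.support) ++ (rw'.support.reverse.tail ++ [u]) := by
    rw [hQdef, Walk.support_append, Walk.support_cons, hconsrevtail]
  have hvBC : v ∈ qw.reverse.support.tail ∨ v ∈ pw.support.tail := by
    have hvP := P.end_mem_support
    rw [hPsupEq] at hvP
    rcases List.mem_append.mp hvP with h | h
    · rcases List.mem_cons.mp h with h' | h'
      · exact absurd h'.symm huv
      · exact Or.inl h'
    · exact Or.inr h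
  have hQpath : Q.IsPath := by
    rw [Walk.isPath_def, hQsupEq]
    rw [List.nodup_append]
    refine ⟨?_, hLAu, ?_⟩
    · rw [List.nodup_cons]
      refine ⟨?_, hLE⟩
      intro hvLE
      rcases hvBC with h | h
      · exact hXY _ (List.mem_append.mpr (Or.inr h)) _ (List.mem_append.mpr (Or.inr hvLE)) rfl
      · exact hLCLE _ h _ hvLE rfl
    · intro z hz z' hz' hzz'; subst hzz'
      rcases List.mem_cons.mp hz with rfl | hzLE
      · rcases hvBC with h | h
        · exact hLAuLB _ hz' _ h rfl
        · exact hXY _ (List.mem_append.mpr (Or.inl hz')) _ (List.mem_append.mpr (Or.inl h)) rfl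
      · exact hXY _ (List.mem_append.mpr (Or.inl hz')) _ (List.mem_append.mpr (Or.inr hzLE)) rfl
  -- shape of Q's edge list
  have hQe : Q.edges = s(v, v₁) :: (rest.edges ++ (rw'.edges.reverse ++ [s(u, u₁)])) := by
    rw [hQdef, Walk.edges_append, Walk.edges_cons, Walk.edges_reverse, Walk.edges_cons]
    simp
  have hQrevE : Q.reverse.edges = s(u, u₁) :: (rw'.edges ++ (rest.edges.reverse ++ [s(v, v₁)])) := by
    rw [Walk.edges_reverse, hQe]
    simp
  have claim1 : ∀ w ∈ Q.support, w ≠ u → w ≠ v → w ∉ A₁.verts := by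
    intro w hwQ hwu hwv hw1
    have hsplitQ := Q.take_spec hwQ
    have hlenQ' : (Q.takeUntil w hwQ).length + (Q.dropUntil w hwQ).length = Q.length := by
      rw [← Walk.length_append, hsplitQ]
    have hedges_split : (Q.takeUntil w hwQ).edges ++ (Q.dropUntil w hwQ).edges = Q.edges := by
      rw [← Walk.edges_append, hsplitQ]
    have hvv₁Qt : s(v, v₁) ∈ (Q.takeUntil w hwQ).edges :=
      mem_head_append (hedges_split.trans hQe) (edges_ne_nil _ (Ne.symm hwv))
    have hrevsplit : (Q.dropUntil w hwQ).reverse.edges ++ (Q.takeUntil w hwQ).reverse.edges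
        = Q.reverse.edges := by
      rw [← Walk.edges_append, ← Walk.reverse_append, hsplitQ]
    have huu₁Qd : s(u, u₁) ∈ (Q.dropUntil w hwQ).edges := by
      have h1 : s(u, u₁) ∈ (Q.dropUntil w hwQ).reverse.edges :=
        mem_head_append (hrevsplit.trans hQrevE) (edges_ne_nil _ (Ne.symm hwu))
      rwa [Walk.edges_reverse, List.mem_reverse] at h1
    obtain ⟨T, hTp, hTE, hTlen⟩ := exists_geodesic h₁tree h₁iso hw1 hv1
    obtain ⟨T', hT'p, hT'E, hT'len⟩ := exists_geodesic h₁tree h₁iso hw1 hu1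
    have hvnotT : s(v, v₁) ∉ T.edges := fun h => hv₁ (Subgraph.mem_edgeSet.mp (hTE _ h)).snd_mem
    have hunotT' : s(u, u₁) ∉ T'.edges :=
      fun h => hu₁ (Subgraph.mem_edgeSet.mp (hT'E _ h)).snd_mem
    have hcb1 := cyc_bound hCmin (Q.takeUntil w hwQ).reverse T
      ((hQpath.takeUntil hwQ).reverse) hTp
      (by rw [Walk.edges_reverse]; exact List.mem_reverse.mpr hvv₁Qt) hvnotT
    have hcb2 := cyc_bound hCmin (Q.dropUntil w hwQ) T'
      (hQpath.dropUntil hwQ) hT'p huu₁Qd hunotT'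
    have hTle : T.length ≤ (Q.takeUntil w hwQ).length := by
      have h1 : (T.length : ℕ∞) ≤ ((Q.takeUntil w hwQ).reverse.length : ℕ∞) := by
        rw [hTlen]; exact SimpleGraph.edist_le _
      rw [Walk.length_reverse] at h1
      exact_mod_cast h1
    have hT'le : T'.length ≤ (Q.dropUntil w hwQ).length := by
      have h1 : (T'.length : ℕ∞) ≤ ((Q.dropUntil w hwQ).length : ℕ∞) := by
        rw [hT'len]; exact SimpleGraph.edist_le _
      exact_mod_cast h1
    rw [Walk.length_reverse] at hcb1
    omega
  have hQsup2 : ∀ w ∈ Q.support, w ∈ A₂.verts := by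
    intro w hw
    by_cases h1 : w = u
    · exact h1 ▸ hu2
    · by_cases h2 : w = v
      · exact h2 ▸ hv2
      · exact (hvert w).resolve_left (claim1 w hw h1 h2)
  have hQE2 : ∀ e ∈ Q.edges, e ∈ A₂.edgeSet := edges_of_support hind₂ Q hQsup2
  have hqlen : (Q.length : ℕ∞) = U.edist v u :=
    path_length_eq h₂tree h₂iso Q hQpath hQE2 hv2 hu2
  have hqβ : Q.length = P.length := by
    have h1 : (Q.length : ℕ∞) = (P.length : ℕ∞) := by
      rw [hqlen, SimpleGraph.edist_comm, ← hβ]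
    exact_mod_cast h1
  have hg2 : C.length = 2 * P.length := by omega
  have hPlen2 : 2 ≤ P.length := by omega
  have claim2 : ∀ w ∈ P.support, w ≠ u → w ≠ v → w ∉ A₂.verts := by
    intro w hwP hwu hwv hw2
    have hsplitP := P.take_spec hwP
    have hlenP' : (P.takeUntil w hwP).length + (P.dropUntil w hwP).length = P.length := by
      rw [← Walk.length_append, hsplitP]
    have hPtpos : 1 ≤ (P.takeUntil w hwP).length := by
      rcases Nat.eq_zero_or_pos (P.takeUntil w hwP).length with h | h
      · exact absurd (Walk.eq_of_length_eq_zero h).symm hwu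
      · exact h
    have hPdpos : 1 ≤ (P.dropUntil w hwP).length := by
      rcases Nat.eq_zero_or_pos (P.dropUntil w hwP).length with h | h
      · exact absurd (Walk.eq_of_length_eq_zero h) hwv
      · exact h
    by_cases hA : ∀ e ∈ (P.takeUntil w hwP).edges, e ∈ A₂.edgeSet
    · by_cases hB : ∀ e ∈ (P.dropUntil w hwP).edges, e ∈ A₂.edgeSet
      · have hPE2 : ∀ e ∈ P.edges, e ∈ A₂.edgeSet := by
          intro e he
          rw [← hsplitP, Walk.edges_append, List.mem_append] at he
          rcases he with he | he
          exacts [hA e he, hB e he]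
        exact hb2 (support_subset_verts P hPE2 hu2 b hbP)
      · push_neg at hB
        obtain ⟨e, heP, he2⟩ := hB
        obtain ⟨T, hTp, hTE, hTlen⟩ := exists_geodesic h₂tree h₂iso hw2 hv2
        have hnT : e ∉ T.edges := fun h => he2 (hTE _ h)
        have hcb := cyc_bound hCmin (P.dropUntil w hwP) T (hPpath.dropUntil hwP) hTp heP hnT
        have hTle : T.length ≤ (P.dropUntil w hwP).length := by
          have h1 : (T.length : ℕ∞) ≤ ((P.dropUntil w hwP).length : ℕ∞) := by
            rw [hTlen]; exact SimpleGraph.edist_le _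
          exact_mod_cast h1
        omega
    · push_neg at hA
      obtain ⟨e, heP, he2⟩ := hA
      obtain ⟨T, hTp, hTE, hTlen⟩ := exists_geodesic h₂tree h₂iso hw2 hu2
      have hnT : e ∉ T.edges := fun h => he2 (hTE _ h)
      have hcb := cyc_bound hCmin (P.takeUntil w hwP).reverse T
        ((hPpath.takeUntil hwP).reverse) hTp
        (by rw [Walk.edges_reverse]; exact List.mem_reverse.mpr heP) hnT
      have hTle : T.length ≤ (P.takeUntil w hwP).length := by
        have h1 : (T.length : ℕ∞) ≤ ((P.takeUntil w hwP).reverse.length : ℕ∞) := by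
          rw [hTlen]; exact SimpleGraph.edist_le _
        rw [Walk.length_reverse] at h1
        exact_mod_cast h1
      rw [Walk.length_reverse] at hcb
      omega
  have hPnot2 : ∀ e ∈ P.edges, e ∉ A₂.edgeSet := by
    intro e
    induction e using Sym2.ind with
    | _ x y =>
      intro heP he2
      have hadj2 : A₂.Adj x y := Subgraph.mem_edgeSet.mp he2
      have hxy : U.Adj x y := P.adj_of_mem_edges heP
      have hxP : x ∈ P.support := P.fst_mem_support_of_mem_edges heP
      have hyP : y ∈ P.support := P.snd_mem_support_of_mem_edges heP
      by_cases hx : x = u ∨ x = v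
      · by_cases hy : y = u ∨ y = v
        · have huvAdj : U.Adj u v := by
            rcases hx with rfl | rfl <;> rcases hy with rfl | rfl
            · exact absurd rfl hxy.ne
            · exact hxy
            · exact hxy.symm
            · exact absurd rfl hxy.ne
          have h1 : U.edist u v = 1 := edist_eq_one_iff_adj.mpr huvAdj
          have h2 : P.length = 1 := by exact_mod_cast hβ.trans h1
          omega
        · push_neg at hy
          exact claim2 y hyP hy.1 hy.2 hadj2.snd_mem
      · push_neg at hx
        exact claim2 x hxP hx.1 hx.2 hadj2.fst_mem
  have hQnot1 : ∀ e ∈ Q.edges, e ∉ A₁.edgeSet := by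
    intro e
    induction e using Sym2.ind with
    | _ x y =>
      intro heQ he1
      have hadj1 : A₁.Adj x y := Subgraph.mem_edgeSet.mp he1
      have hxy : U.Adj x y := Q.adj_of_mem_edges heQ
      have hxQ : x ∈ Q.support := Q.fst_mem_support_of_mem_edges heQ
      have hyQ : y ∈ Q.support := Q.snd_mem_support_of_mem_edges heQ
      by_cases hx : x = u ∨ x = v
      · by_cases hy : y = u ∨ y = v
        · have huvAdj : U.Adj u v := by
            rcases hx with rfl | rfl <;> rcases hy with rfl | rfl
            · exact absurd rfl hxy.ne
            · exact hxy
            · exact hxy.symm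
            · exact absurd rfl hxy.ne
          have h1 : U.edist u v = 1 := edist_eq_one_iff_adj.mpr huvAdj
          have h2 : P.length = 1 := by exact_mod_cast hβ.trans h1
          omega
        · push_neg at hy
          exact claim1 y hyQ hy.1 hy.2 hadj1.snd_mem
      · push_neg at hx
        exact claim1 x hxQ hx.1 hx.2 hadj1.fst_mem
  refine ⟨u, v, P, Q.reverse, huv, hPpath, hQpath.reverse, ?_, ?_, ?_, hu1, hu2, hv1, hv2,
    ?_, ?_, ?_, ?_, hβ, ?_, hg2⟩
  · intro e
    rw [hCedges e, Walk.edges_reverse, List.mem_reverse]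
  · intro e he hrev
    rw [Walk.edges_reverse, List.mem_reverse] at hrev
    exact hPnot2 e he (hQE2 e hrev)
  · intro w hw1 hw2'
    by_contra hcon
    push_neg at hcon
    rw [Walk.support_reverse, List.mem_reverse] at hw2'
    rcases hvert w with h | h
    · exact claim1 w hw2' hcon.1 hcon.2 h
    · exact claim2 w hw1 hcon.1 hcon.2 h
  · intro w hw hwu hwv
    exact ⟨hPsup w hw, claim2 w hw hwu hwv⟩
  · intro e he
    exact ⟨hPE1 e he, hPnot2 e he⟩
  · intro w hw hwu hwv
    rw [Walk.support_reverse, List.mem_reverse] at hw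
    exact ⟨hQsup2 w hw, claim1 w hw hwu hwv⟩
  · intro e he
    rw [Walk.edges_reverse, List.mem_reverse] at he
    exact ⟨hQE2 e he, hQnot1 e he⟩
  · rw [Walk.length_reverse, hqβ]
    exact hβ
end
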